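/- An equiangular set of L unit vectors in ℝ^D (all pairwise absolute inner products equal to some c with 0 < c < 1) satisfies L ≤ D(D+1)/2. -/

import Mathlib

/-- An equiangular set of `L` unit vectors in `ℝ^D` (pairwise absolute inner products all
equal to some `c` with `0 < c < 1`) has at most `D(D+1)/2` elements. -/
theorem equiangular_lines_bound (D L : ℕ) (v : Fin L → EuclideanSpace ℝ (Fin D)) (c : ℝ)
    (hc0 : 0 < c) (hc1 : c < 1)
    (hunit : ∀ i, ‖v i‖ = 1)
    (heq : ∀ i j, i ≠ j → |(inner ℝ (v i) (v j) : ℝ)| = c) :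
    L ≤ D * (D + 1) / 2 := by
  classical
  set f : Fin L → Sym2 (Fin D) → ℝ :=
    fun i => Sym2.lift ⟨fun a b => v i a * v i b, fun a b => mul_comm _ _⟩ with hf
  have hinner : ∀ i j, (inner ℝ (v i) (v j) : ℝ) = ∑ a, v i a * v j a := by
    intro i j
    rw [PiLp.inner_apply]
    simp [RCLike.inner_apply, mul_comm]
  have hli : LinearIndependent ℝ f := by
    rw [Fintype.linearIndependent_iff]
    intro g hg j
    have hval : ∀ a b : Fin D, ∑ i, g i * (v i a * v i b) = 0 := by
      intro a b
      have := congrFun hg s(a, b)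
      simpa [f, Finset.sum_apply] using this
    have key : ∀ k : Fin L, ∑ i, g i * (inner ℝ (v i) (v k) : ℝ) ^ 2 = 0 := by
      intro k
      calc ∑ i, g i * (inner ℝ (v i) (v k) : ℝ) ^ 2
          = ∑ i, ∑ a, ∑ b, g i * (v i a * v i b) * (v k a * v k b) := by
            refine Finset.sum_congr rfl fun i _ => ?_
            rw [hinner, sq, Finset.sum_mul_sum]
            simp only [Finset.mul_sum]
            exact Finset.sum_congr rfl fun a _ =>
              Finset.sum_congr rfl fun b _ => by ring
        _ = ∑ a, ∑ i, ∑ b, g i * (v i a * v i b) * (v k a * v k b) :=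
            Finset.sum_comm
        _ = ∑ a, ∑ b, ∑ i, g i * (v i a * v i b) * (v k a * v k b) :=
            Finset.sum_congr rfl fun a _ => Finset.sum_comm
        _ = ∑ a, ∑ b, (∑ i, g i * (v i a * v i b)) * (v k a * v k b) :=
            Finset.sum_congr rfl fun a _ => Finset.sum_congr rfl fun b _ =>
              (Finset.sum_mul _ _ _).symm
        _ = 0 := by simp [hval]
    set S := ∑ i, g i with hS
    have hself : ∀ i, (inner ℝ (v i) (v i) : ℝ) = 1 := by
      intro i
      rw [real_inner_self_eq_norm_sq, hunit]; norm_num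
    have hsq : ∀ i k : Fin L, i ≠ k → (inner ℝ (v i) (v k) : ℝ) ^ 2 = c ^ 2 := by
      intro i k h
      rw [← sq_abs, heq i k h]
    have keyk : ∀ k : Fin L, g k * (1 - c ^ 2) + c ^ 2 * S = 0 := by
      intro k
      have h0 := key k
      rw [← Finset.add_sum_erase _ _ (Finset.mem_univ k), hself k] at h0
      have h1 : ∑ i ∈ Finset.univ.erase k, g i * (inner ℝ (v i) (v k) : ℝ) ^ 2
          = c ^ 2 * (S - g k) := by
        have h2 : ∑ i ∈ Finset.univ.erase k, g i * (inner ℝ (v i) (v k) : ℝ) ^ 2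
            = ∑ i ∈ Finset.univ.erase k, c ^ 2 * g i := by
          refine Finset.sum_congr rfl fun i hi => ?_
          rw [hsq i k (Finset.ne_of_mem_erase hi)]; ring
        rw [h2, ← Finset.mul_sum, Finset.sum_erase_eq_sub (Finset.mem_univ k)]
      rw [h1] at h0
      linear_combination h0
    have hL1 : (1 : ℝ) ≤ (L : ℝ) := by
      have : 0 < L := Fin.pos j
      exact_mod_cast this
    have hsum : S * (1 - c ^ 2) + (L : ℝ) * (c ^ 2 * S) = 0 := by
      have := Finset.sum_congr rfl (fun k (_ : k ∈ Finset.univ) => keyk k)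
      rw [Finset.sum_add_distrib, ← Finset.sum_mul, Finset.sum_const,
        Finset.sum_const_zero, Finset.card_univ, Fintype.card_fin,
        nsmul_eq_mul] at this
      exact this
    have hS0 : S = 0 := by
      have hfac : S * (1 - c ^ 2 + (L : ℝ) * c ^ 2) = 0 := by linear_combination hsum
      have hpos : 0 < 1 - c ^ 2 + (L : ℝ) * c ^ 2 := by nlinarith [sq_nonneg c]
      exact (mul_eq_zero.mp hfac).resolve_right (ne_of_gt hpos)
    have hj := keyk j
    rw [hS0] at hj
    have h1c : 0 < 1 - c ^ 2 := by nlinarith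
    have : g j * (1 - c ^ 2) = 0 := by linarith
    exact (mul_eq_zero.mp this).resolve_right (ne_of_gt h1c)
  have hcard := hli.fintype_card_le_finrank
  simp only [Fintype.card_fin, Module.finrank_fintype_fun_eq_card] at hcard
  calc L ≤ Fintype.card (Sym2 (Fin D)) := hcard
    _ = D * (D + 1) / 2 := by
        rw [Sym2.card, Fintype.card_fin, Nat.choose_two_right,
          Nat.add_sub_cancel, Nat.mul_comm]
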